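/- For every real y₁ > 0, the integral ∫_{y₁ - ln(e^{y₁}-1)}^∞ 1/(e^{y₁} + e^{y₂}) dy₂ equals y₁·e^{-y₁}. -/

import Mathlib

open Real MeasureTheory Filter Set

theorem stmt_11 (y₁ : ℝ) (hy₁ : 0 < y₁) :
    ∫ y₂ in Set.Ioi (y₁ - Real.log (Real.exp y₁ - 1)),
      1 / (Real.exp y₁ + Real.exp y₂) = y₁ * Real.exp (-y₁) := by
  set c := Real.exp y₁ with hc
  have hc1 : 1 < c := by
    rw [hc]; simpa using Real.exp_lt_exp.2 hy₁
  have hc0 : 0 < c := lt_trans one_pos hc1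
  have hlogc : Real.log c = y₁ := by rw [hc, Real.log_exp]
  set a := y₁ - Real.log (c - 1) with ha
  set f : ℝ → ℝ := fun x => (x - Real.log (c + Real.exp x)) / c with hf
  have hpos : ∀ x : ℝ, 0 < c + Real.exp x := fun x =>
    add_pos hc0 (Real.exp_pos x)
  have hderiv : ∀ x ∈ Set.Ici a, HasDerivAt f (1 / (c + Real.exp x)) x := by
    intro x _
    have h1 : HasDerivAt (fun x : ℝ => c + Real.exp x) (Real.exp x) x :=
      (Real.hasDerivAt_exp x).const_add c
    have h2 : HasDerivAt (fun x : ℝ => Real.log (c + Real.exp x))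
        (Real.exp x / (c + Real.exp x)) x := h1.log (hpos x).ne'
    have h3 : HasDerivAt (fun x : ℝ => x - Real.log (c + Real.exp x))
        (1 - Real.exp x / (c + Real.exp x)) x := (hasDerivAt_id x).sub h2
    have h4 := h3.div_const c
    refine h4.congr_deriv ?_
    rw [one_sub_div (hpos x).ne', add_sub_cancel_right, div_div, mul_comm, ← div_div, div_self hc0.ne']
  have hint : IntegrableOn (fun x => 1 / (c + Real.exp x)) (Set.Ioi a) := by
    have hexp : IntegrableOn (fun x => Real.exp (-x)) (Set.Ioi a) := by
      simpa using exp_neg_integrableOn_Ioi a one_pos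
    refine hexp.mono' ?_ ?_
    · exact (Continuous.div continuous_const
        (continuous_const.add Real.continuous_exp) (fun x => (hpos x).ne')).aestronglyMeasurable
    · filter_upwards with x
      rw [Real.norm_eq_abs, abs_of_pos (by positivity)]
      simp only [Real.exp_neg, one_div]
      exact inv_anti₀ (Real.exp_pos x) (le_add_of_nonneg_left hc0.le)
  have htend : Tendsto f atTop (nhds 0) := by
    have key : ∀ x : ℝ, f x = -Real.log (1 + c * Real.exp (-x)) / c := by
      intro x
      have hx1 : c + Real.exp x = Real.exp x * (1 + c * Real.exp (-x)) := by
        rw [Real.exp_neg]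
        field_simp
        ring
      simp only [hf]
      rw [hx1, Real.log_mul (Real.exp_pos x).ne' (by positivity), Real.log_exp]
      ring
    simp only [funext key]
    have h1 : Tendsto (fun x : ℝ => 1 + c * Real.exp (-x)) atTop (nhds 1) := by
      have h2 := Real.tendsto_exp_neg_atTop_nhds_zero.const_mul c
      simpa using tendsto_const_nhds.add h2
    have h3 : Tendsto (fun x : ℝ => Real.log (1 + c * Real.exp (-x))) atTop (nhds 0) := by
      have := (Real.continuousAt_log one_ne_zero).tendsto
      rw [Real.log_one] at this
      exact this.comp h1
    simpa using (h3.neg).div_const c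
  have hmain := MeasureTheory.integral_Ioi_of_hasDerivAt_of_tendsto' hderiv hint htend
  rw [hmain]
  have hea : Real.exp a = c / (c - 1) := by
    rw [ha, Real.exp_sub, Real.exp_log (by linarith), hc]
  have hfa : f a = -(y₁ / c) := by
    simp only [hf]
    rw [hea]
    have h5 : c + c / (c - 1) = c * c / (c - 1) := by
      field_simp [sub_ne_zero.mpr hc1.ne']
      ring
    rw [h5, Real.log_div (by positivity) (by linarith), Real.log_mul hc0.ne' hc0.ne',
      hlogc, ha]
    ring
  rw [hfa, Real.exp_neg, ← hc]
  ring
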